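/- Let X be a reflexive Banach space and T : X → X a power bounded operator. Then X decomposes as a (topological) direct sum X = Ker(I - T) ⊕ closure(Ran(I - T)). -/

import Mathlib

open Filter Finset NormedSpace

section MET
set_option linter.unusedSectionVars false

variable {X : Type*} [NormedAddCommGroup X] [NormedSpace ℂ X] [CompleteSpace X]

lemma met_geom (T : X →L[ℂ] X) (n : ℕ) :
    (1 - T) * (∑ k ∈ Finset.range n, T ^ k) = 1 - T ^ n := by
  have h := mul_geom_sum T n
  have h2 : (1 : X →L[ℂ] X) - T = -(T - 1) := (neg_sub T 1).symm
  rw [h2, neg_mul, h, neg_sub]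

lemma met_geom_apply (T : X →L[ℂ] X) (n : ℕ) (w : X) :
    (1 - T) ((∑ k ∈ Finset.range n, T ^ k) w) = w - (T ^ n) w := by
  rw [← ContinuousLinearMap.mul_apply, met_geom]
  simp

lemma met_mem_range (T : X →L[ℂ] X) (k : ℕ) (w : X) :
    (T ^ k) w - w ∈ LinearMap.range (((1 : X →L[ℂ] X) - T : X →L[ℂ] X) : X →ₗ[ℂ] X) := by
  refine ⟨-((∑ j ∈ Finset.range k, T ^ j) w), ?_⟩
  have h := met_geom_apply T k w
  simp only [ContinuousLinearMap.coe_sub, LinearMap.sub_apply, ContinuousLinearMap.coe_coe,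
    map_neg] at *
  rw [← ContinuousLinearMap.sub_apply, h]
  abel

end MET

section MET2
set_option linter.unusedSectionVars false
variable {X : Type*} [NormedAddCommGroup X] [NormedSpace ℂ X] [CompleteSpace X]

lemma met_cast (n : ℕ) : ‖((n : ℂ) + 1)⁻¹‖ = ((n : ℝ) + 1)⁻¹ := by
  rw [norm_inv, show ((n:ℂ)+1) = ((n+1 : ℕ) : ℂ) by push_cast; ring, Complex.norm_natCast]
  push_cast; ring

lemma met_sum_norm (T : X →L[ℂ] X) (c₀ : ℝ) (hT : ∀ k : ℕ, ‖T ^ k‖ ≤ c₀) (n : ℕ) (w : X) :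
    ‖(∑ k ∈ Finset.range n, T ^ k) w‖ ≤ n * (c₀ * ‖w‖) := by
  rw [ContinuousLinearMap.sum_apply]
  calc ‖∑ k ∈ Finset.range n, (T ^ k) w‖ ≤ ∑ k ∈ Finset.range n, ‖(T ^ k) w‖ :=
        norm_sum_le _ _
    _ ≤ ∑ k ∈ Finset.range n, c₀ * ‖w‖ := by
        refine Finset.sum_le_sum fun k _ => ?_
        exact ((T ^ k).le_opNorm w).trans (mul_le_mul_of_nonneg_right (hT k) (norm_nonneg w))
    _ = n * (c₀ * ‖w‖) := by simp [Finset.sum_const, mul_comm]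

lemma met_A_norm (T : X →L[ℂ] X) (c₀ : ℝ) (hT : ∀ k : ℕ, ‖T ^ k‖ ≤ c₀) (n : ℕ) (w : X) :
    ‖((n : ℂ) + 1)⁻¹ • ((∑ k ∈ Finset.range (n + 1), T ^ k) w)‖ ≤ c₀ * ‖w‖ := by
  rw [norm_smul, met_cast]
  calc ((n : ℝ) + 1)⁻¹ * ‖(∑ k ∈ Finset.range (n + 1), T ^ k) w‖
      ≤ ((n : ℝ) + 1)⁻¹ * ((n + 1) * (c₀ * ‖w‖)) := by
        refine mul_le_mul_of_nonneg_left ?_ (by positivity)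
        have := met_sum_norm T c₀ hT (n + 1) w
        push_cast at this ⊢
        linarith
    _ = c₀ * ‖w‖ := by field_simp

lemma met_A_sub_mem (T : X →L[ℂ] X) (n : ℕ) (w : X) :
    ((n : ℂ) + 1)⁻¹ • ((∑ k ∈ Finset.range (n + 1), T ^ k) w) - w ∈
      LinearMap.range (((1 : X →L[ℂ] X) - T : X →L[ℂ] X) : X →ₗ[ℂ] X) := by
  have hw : ((n : ℂ) + 1)⁻¹ • ((n + 1 : ℕ) • w) = w := by
    rw [← Nat.cast_smul_eq_nsmul ℂ, smul_smul]
    rw [show (((n + 1 : ℕ) : ℂ)) = (n : ℂ) + 1 by push_cast; ring]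
    rw [inv_mul_cancel₀ (Nat.cast_add_one_ne_zero n), one_smul]
  have key : ((n : ℂ) + 1)⁻¹ • ((∑ k ∈ Finset.range (n + 1), T ^ k) w) - w
      = ((n : ℂ) + 1)⁻¹ • (∑ k ∈ Finset.range (n + 1), ((T ^ k) w - w)) := by
    rw [Finset.sum_sub_distrib, smul_sub, ContinuousLinearMap.sum_apply]
    rw [Finset.sum_const, Finset.card_range, hw]
  rw [key]
  exact Submodule.smul_mem _ _ (Submodule.sum_mem _ fun k _ => met_mem_range T k w)

lemma met_tendsto (C : ℝ) :
    Filter.Tendsto (fun n : ℕ => ((n : ℝ) + 1)⁻¹ * C) Filter.atTop (nhds 0) := by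
  have h := tendsto_one_div_add_atTop_nhds_zero_nat (𝕜 := ℝ)
  simpa [one_div] using h.mul_const C

end MET2

section MET3
set_option linter.unusedSectionVars false
variable {X : Type*} [NormedAddCommGroup X] [NormedSpace ℂ X] [CompleteSpace X]

lemma met_geom' (T : X →L[ℂ] X) (n : ℕ) :
    (∑ k ∈ Finset.range n, T ^ k) * (1 - T) = 1 - T ^ n := by
  have h := geom_sum_mul T n
  have h2 : (1 : X →L[ℂ] X) - T = -(T - 1) := (neg_sub T 1).symm
  rw [h2, mul_neg, h, neg_sub]

lemma met_geom'_apply (T : X →L[ℂ] X) (n : ℕ) (w : X) :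
    (∑ k ∈ Finset.range n, T ^ k) ((1 - T) w) = w - (T ^ n) w := by
  rw [← ContinuousLinearMap.mul_apply, met_geom']
  simp

lemma met_inv_smul (n : ℕ) (w : X) : ((n : ℂ) + 1)⁻¹ • ((n + 1 : ℕ) • w) = w := by
  rw [← Nat.cast_smul_eq_nsmul ℂ, smul_smul]
  rw [show (((n + 1 : ℕ) : ℂ)) = (n : ℂ) + 1 by push_cast; ring]
  rw [inv_mul_cancel₀ (Nat.cast_add_one_ne_zero n), one_smul]

lemma met_tail_norm (T : X →L[ℂ] X) (c₀ : ℝ) (hT : ∀ k : ℕ, ‖T ^ k‖ ≤ c₀) (n : ℕ) (w : X) :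
    ‖((n : ℂ) + 1)⁻¹ • (w - (T ^ (n + 1)) w)‖ ≤ ((n : ℝ) + 1)⁻¹ * ((1 + c₀) * ‖w‖) := by
  rw [norm_smul, met_cast]
  refine mul_le_mul_of_nonneg_left ?_ (by positivity)
  calc ‖w - (T ^ (n + 1)) w‖ ≤ ‖w‖ + ‖(T ^ (n + 1)) w‖ := norm_sub_le _ _
    _ ≤ ‖w‖ + c₀ * ‖w‖ := by
        have := ((T ^ (n + 1)).le_opNorm w).trans
          (mul_le_mul_of_nonneg_right (hT (n + 1)) (norm_nonneg w))
        linarith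
    _ = (1 + c₀) * ‖w‖ := by ring

end MET3

open Filter Finset NormedSpace

section MET2b
set_option linter.unusedSectionVars false
variable {X : Type*} [NormedAddCommGroup X] [NormedSpace ℂ X] [CompleteSpace X]

set_option maxHeartbeats 1000000 in
lemma met_exists (hrefl : Function.Surjective (NormedSpace.inclusionInDoubleDual ℂ X))
    (T : X →L[ℂ] X) (c₀ : ℝ) (hT : ∀ k : ℕ, ‖T ^ k‖ ≤ c₀) (x : X) :
    ∃ y : X, T y = y ∧
      x - y ∈ (LinearMap.range (((1 : X →L[ℂ] X) - T : X →L[ℂ] X) : X →ₗ[ℂ] X)).topologicalClosure := by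
  set p := (LinearMap.range (((1 : X →L[ℂ] X) - T : X →L[ℂ] X) : X →ₗ[ℂ] X)).topologicalClosure with hp
  set u : ℕ → X := fun n => ((n : ℂ) + 1)⁻¹ • ((∑ k ∈ Finset.range (n + 1), T ^ k) x) with hu
  set ι := NormedSpace.inclusionInDoubleDual ℂ X with hι
  set v : ℕ → WeakDual ℂ (StrongDual ℂ X) := fun n => StrongDual.toWeakDual (ι (u n)) with hv
  have hub : ∀ n, ‖u n‖ ≤ c₀ * ‖x‖ := fun n => met_A_norm T c₀ hT n x
  have hvK : ∀ n, v n ∈ WeakDual.toStrongDual ⁻¹' Metric.closedBall 0 (c₀ * ‖x‖) := by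
    intro n
    simp only [Set.mem_preimage, Metric.mem_closedBall, dist_zero_right]
    refine (dist_zero_right (E := StrongDual ℂ (StrongDual ℂ X)) _).le.trans ?_
    show ‖WeakDual.toStrongDual (v n)‖ ≤ c₀ * ‖x‖
    have h5 : WeakDual.toStrongDual (v n) = ι (u n) := StrongDual.toWeakDual.symm_apply_apply (ι (u n))
    rw [h5]
    calc ‖ι (u n)‖ ≤ ‖u n‖ := by
          exact NormedSpace.double_dual_bound ℂ X (u n)
      _ ≤ c₀ * ‖x‖ := hub n
  have hmap : Filter.map v Filter.atTop ≤
      Filter.principal (WeakDual.toStrongDual ⁻¹' Metric.closedBall 0 (c₀ * ‖x‖)) :=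
    Filter.le_principal_iff.mpr (Filter.mem_map.mpr (Filter.Eventually.of_forall hvK))
  obtain ⟨z, -, hz⟩ := (WeakDual.isCompact_closedBall (𝕜 := ℂ) (E := StrongDual ℂ X) 0 (c₀ * ‖x‖)).exists_mapClusterPt hmap
  obtain ⟨y, hy⟩ := hrefl (WeakDual.toStrongDual z)
  have key : ∀ (f : StrongDual ℂ X) (c : ℂ),
      Filter.Tendsto (fun n => f (u n)) Filter.atTop (nhds c) → f y = c := by
    intro f c hfc
    have h2 : MapClusterPt (z f) Filter.atTop ((fun w : WeakDual ℂ (StrongDual ℂ X) => w f) ∘ v) :=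
      hz.continuousAt_comp (WeakDual.eval_continuous f).continuousAt
    have h3 : ((fun w : WeakDual ℂ (StrongDual ℂ X) => w f) ∘ v) = fun n => f (u n) := rfl
    have h4 : z f = f y := by
      have h6 : ι y f = f y := rfl
      rw [← h6, hy]
      exact (WeakDual.toStrongDual_apply z f).symm
    rw [h3, h4] at h2
    exact eq_of_nhds_neBot (h2.clusterPt.mono hfc)
  have hTy : T y = y := by
    have h0 : (1 - T) y = 0 := by
      apply NormedSpace.eq_zero_of_forall_dual_eq_zero ℂ
      intro g
      have hb : ∀ n : ℕ, ‖(1 - T) (u n)‖ ≤ ((n : ℝ) + 1)⁻¹ * ((1 + c₀) * ‖x‖) := by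
        intro n
        have heq : (1 - T) (u n) = ((n : ℂ) + 1)⁻¹ • (x - (T ^ (n + 1)) x) := by
          show (1 - T) (((n : ℂ) + 1)⁻¹ • ((∑ k ∈ Finset.range (n + 1), T ^ k) x)) = _
          rw [map_smul, met_geom_apply]
        rw [heq, norm_smul, met_cast]
        refine mul_le_mul_of_nonneg_left ?_ (by positivity)
        calc ‖x - (T ^ (n + 1)) x‖ ≤ ‖x‖ + ‖(T ^ (n + 1)) x‖ := norm_sub_le _ _
          _ ≤ ‖x‖ + c₀ * ‖x‖ := by
              have := ((T ^ (n + 1)).le_opNorm x).trans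
                (mul_le_mul_of_nonneg_right (hT (n + 1)) (norm_nonneg x))
              linarith
          _ = (1 + c₀) * ‖x‖ := by ring
      have h0' : Filter.Tendsto (fun n => (1 - T) (u n)) Filter.atTop (nhds 0) :=
        squeeze_zero_norm hb (met_tendsto _)
      have hten : Filter.Tendsto (fun n => (g ∘L (1 - T)) (u n)) Filter.atTop (nhds 0) := by
        have h10 := (g.continuous.tendsto 0).comp h0'
        rw [map_zero] at h10
        exact h10
      simpa using key (g ∘L (1 - T)) 0 hten
    have h7 : y - T y = 0 := by simpa using h0
    exact (sub_eq_zero.mp h7).symm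
  refine ⟨y, hTy, ?_⟩
  haveI hpc : IsClosed (p : Set X) := Submodule.isClosed_topologicalClosure _
  let π : X →L[ℂ] X ⧸ p := LinearMap.mkContinuous p.mkQ 1 (fun m => by
    simpa [one_mul] using Submodule.Quotient.norm_mk_le p m)
  have hπmk : ∀ w : X, π w = Submodule.Quotient.mk w := fun w => rfl
  have hπ : π (x - y) = 0 := by
    apply NormedSpace.eq_zero_of_forall_dual_eq_zero ℂ
    intro g
    have hconst : ∀ n, π (u n) = π x := by
      intro n
      have hmem : u n - x ∈ p := Submodule.le_topologicalClosure _ (met_A_sub_mem T n x)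
      have h8 : π (u n - x) = 0 := by
        rw [hπmk]
        exact (Submodule.Quotient.mk_eq_zero p).mpr hmem
      rw [map_sub] at h8
      exact sub_eq_zero.mp h8
    have hten : Filter.Tendsto (fun n => (g ∘L π) (u n)) Filter.atTop (nhds ((g ∘L π) x)) := by
      have h9 : (fun n => (g ∘L π) (u n)) = fun _ => (g ∘L π) x := by
        funext n
        simp only [ContinuousLinearMap.comp_apply, hconst n]
      rw [h9]
      exact tendsto_const_nhds
    have hk := key (g ∘L π) _ hten
    simp only [ContinuousLinearMap.comp_apply] at hk
    rw [map_sub, map_sub, hk, sub_self]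
  rw [hπmk] at hπ
  exact (Submodule.Quotient.mk_eq_zero p).mp hπ

end MET2b

/-- Mean Ergodic Theorem decomposition: if X is a reflexive complex Banach space and
T is power bounded, then X = Ker(I - T) ⊕ closure(Ran(I - T)) as a topological direct sum. -/
theorem stmt11 {X : Type*} [NormedAddCommGroup X] [NormedSpace ℂ X] [CompleteSpace X]
    (hrefl : Function.Surjective (NormedSpace.inclusionInDoubleDual ℂ X))
    (T : X →L[ℂ] X) (c₀ : ℝ) (hT : ∀ k : ℕ, ‖T ^ k‖ ≤ c₀) :
    IsCompl (LinearMap.ker (((1 : X →L[ℂ] X) - T : X →L[ℂ] X) : X →ₗ[ℂ] X))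
      (LinearMap.range (((1 : X →L[ℂ] X) - T : X →L[ℂ] X) : X →ₗ[ℂ] X)).topologicalClosure := by
  have hc0 : 0 ≤ c₀ := (norm_nonneg _).trans (hT 0)
  constructor
  · -- disjointness
    rw [Submodule.disjoint_def]
    intro a haN haP
    have hTa : T a = a := by
      have h1 := LinearMap.mem_ker.mp haN
      change ((1 : X →L[ℂ] X) - T) a = 0 at h1
      rw [ContinuousLinearMap.sub_apply, ContinuousLinearMap.one_apply] at h1
      exact (sub_eq_zero.mp h1).symm
    by_contra hne
    have hna : 0 < ‖a‖ := norm_pos_iff.mpr hne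
    -- T^k a = a, hence the averages fix a
    have hpow : ∀ k : ℕ, (T ^ k) a = a := by
      intro k
      induction k with
      | zero => simp
      | succ k ih => rw [pow_succ, ContinuousLinearMap.mul_apply, hTa, ih]
    have hfix : ∀ n : ℕ, ((n : ℂ) + 1)⁻¹ • ((∑ k ∈ Finset.range (n + 1), T ^ k) a) = a := by
      intro n
      rw [ContinuousLinearMap.sum_apply]
      have : ∑ k ∈ Finset.range (n + 1), (T ^ k) a = (n + 1 : ℕ) • a := by
        rw [Finset.sum_congr rfl fun k _ => hpow k, Finset.sum_const, Finset.card_range]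
      rw [this, met_inv_smul]
    -- key estimate : ‖a‖ ≤ c₀ * ‖a - r‖ for all r in the range
    have hest : ∀ r ∈ LinearMap.range (((1 : X →L[ℂ] X) - T : X →L[ℂ] X) : X →ₗ[ℂ] X), ‖a‖ ≤ c₀ * ‖a - r‖ := by
      rintro r ⟨w, hw⟩
      change ((1 : X →L[ℂ] X) - T) w = r at hw
      have hbnd : ∀ n : ℕ, ‖a‖ ≤ c₀ * ‖a - r‖ + ((n : ℝ) + 1)⁻¹ * ((1 + c₀) * ‖w‖) := by
        intro n
        have hsplit : a = ((n : ℂ) + 1)⁻¹ • ((∑ k ∈ Finset.range (n + 1), T ^ k) (a - r))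
            + ((n : ℂ) + 1)⁻¹ • ((∑ k ∈ Finset.range (n + 1), T ^ k) r) := by
          rw [← smul_add, ← map_add, sub_add_cancel, hfix n]
        have h2 : ((n : ℂ) + 1)⁻¹ • ((∑ k ∈ Finset.range (n + 1), T ^ k) r)
            = ((n : ℂ) + 1)⁻¹ • (w - (T ^ (n + 1)) w) := by
          rw [← hw, met_geom'_apply]
        calc ‖a‖ ≤ ‖((n : ℂ) + 1)⁻¹ • ((∑ k ∈ Finset.range (n + 1), T ^ k) (a - r))‖
              + ‖((n : ℂ) + 1)⁻¹ • ((∑ k ∈ Finset.range (n + 1), T ^ k) r)‖ := by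
              conv_lhs => rw [hsplit]
              exact norm_add_le _ _
          _ ≤ c₀ * ‖a - r‖ + ((n : ℝ) + 1)⁻¹ * ((1 + c₀) * ‖w‖) := by
              gcongr ?_ + ?_
              · exact met_A_norm T c₀ hT n (a - r)
              · rw [h2]; exact met_tail_norm T c₀ hT n w
      have hlim : Filter.Tendsto
          (fun n : ℕ => c₀ * ‖a - r‖ + ((n : ℝ) + 1)⁻¹ * ((1 + c₀) * ‖w‖))
          Filter.atTop (nhds (c₀ * ‖a - r‖ + 0)) :=
        tendsto_const_nhds.add (met_tendsto _)
      have := ge_of_tendsto hlim (Filter.Eventually.of_forall hbnd)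
      linarith
    -- use that a is in the closure of the range
    have hacl : a ∈ closure ((LinearMap.range (((1 : X →L[ℂ] X) - T : X →L[ℂ] X) : X →ₗ[ℂ] X)) : Set X) := by
      rw [← Submodule.topologicalClosure_coe]
      exact haP
    set ε := ‖a‖ / (c₀ + 1) with hε
    have hεpos : 0 < ε := by positivity
    obtain ⟨r, hrR, hdr⟩ := Metric.mem_closure_iff.mp hacl ε hεpos
    have h3 : ‖a‖ ≤ c₀ * ‖a - r‖ := hest r hrR
    have h4 : ‖a - r‖ < ε := by rwa [← dist_eq_norm]
    have h5 : c₀ * ‖a - r‖ ≤ c₀ * ε := mul_le_mul_of_nonneg_left h4.le hc0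
    have h6 : ε * (c₀ + 1) = ‖a‖ := by
      rw [hε]
      exact div_mul_cancel₀ _ (by positivity)
    linarith
  · -- codisjointness
    rw [codisjoint_iff, Submodule.eq_top_iff']
    intro x
    obtain ⟨y, hTy, hxy⟩ := met_exists hrefl T c₀ hT x
    have hyN : y ∈ LinearMap.ker (((1 : X →L[ℂ] X) - T : X →L[ℂ] X) : X →ₗ[ℂ] X) := by
      rw [LinearMap.mem_ker]
      show ((1 : X →L[ℂ] X) - T) y = 0
      rw [ContinuousLinearMap.sub_apply, ContinuousLinearMap.one_apply, hTy, sub_self]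
    have h7 := Submodule.add_mem_sup hyN hxy
    have h8 : y + (x - y) = x := by abel
    rwa [h8] at h7
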